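/- Let m ≥ 1, let X ⊆ ℝ^m, and let (U_i)_{i ∈ I} be a family of open subsets of ℝ^m with X ⊆ ⋃_{i ∈ I} U_i. Then X is a conical limit set if and only if X ∩ U_i is a conical limit set for every i ∈ I. -/

import Mathlib

open Filter Topology

/-- The open upper half-space over a normed space `V`: pairs `(t, v)` with `t > 0`. -/
def upperHalf (V : Type*) [NormedAddCommGroup V] : Set (ℝ × V) := {p | 0 < p.1}

/-- The conical limit set of `E ⊆ ℝ × V`: points `x` for which there are `C > 0` and a
sequence `(t_n, v_n)` in `E` with `t_n → 0`, `v_n → x` and `‖v_n - x‖ ≤ C * t_n`. -/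
def conicalLimitSet {V : Type*} [NormedAddCommGroup V] (E : Set (ℝ × V)) : Set V :=
  {x | ∃ C > 0, ∃ w : ℕ → ℝ × V, (∀ n, w n ∈ E) ∧
    Tendsto (fun n => (w n).1) atTop (𝓝 (0 : ℝ)) ∧
    Tendsto (fun n => (w n).2) atTop (𝓝 x) ∧
    ∀ n, ‖(w n).2 - x‖ ≤ C * (w n).1}

/-- `X ⊆ V` is a conical limit set if it is the conical limit set of some subset of the
upper half-space. -/
def IsConicalLimitSet {V : Type*} [NormedAddCommGroup V] (X : Set V) : Prop :=
  ∃ E ⊆ upperHalf V, conicalLimitSet E = X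

namespace ConicalAux

variable {V : Type*} [NormedAddCommGroup V]

lemma upperHalf_pos {p : ℝ × V} (h : p ∈ upperHalf V) : 0 < p.1 := h

lemma conical_mono {E F : Set (ℝ × V)} (h : E ⊆ F) :
    conicalLimitSet E ⊆ conicalLimitSet F := by
  rintro x ⟨C, hC, w, hmem, ht, hv, hb⟩
  exact ⟨C, hC, w, fun n => h (hmem n), ht, hv, hb⟩

lemma conical_empty : conicalLimitSet (∅ : Set (ℝ × V)) = ∅ := by
  ext x
  simp only [conicalLimitSet, Set.mem_setOf_eq, Set.mem_empty_iff_false, iff_false]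
  rintro ⟨C, hC, w, hmem, -⟩
  exact hmem 0

lemma sqrt_contra {t C d : ℝ} (ht : 0 < t) (h1 : C * Real.sqrt t < 1)
    (h2 : Real.sqrt t ≤ d) (h3 : d ≤ C * t) : False := by
  have hs : 0 < Real.sqrt t := Real.sqrt_pos.mpr ht
  nlinarith [Real.mul_self_sqrt ht.le]

lemma sqrt_tendsto {f : ℕ → ℝ} (h : Tendsto f atTop (𝓝 0)) :
    Tendsto (fun n => Real.sqrt (f n)) atTop (𝓝 0) :=
  (Real.continuous_sqrt.tendsto' 0 0 Real.sqrt_zero).comp h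

lemma mem_of_eventually {E : Set (ℝ × V)} {x : V} {C : ℝ} (hC : 0 < C) (w : ℕ → ℝ × V)
    (hmem : ∀ᶠ n in atTop, w n ∈ E)
    (ht : Tendsto (fun n => (w n).1) atTop (𝓝 (0 : ℝ)))
    (hv : Tendsto (fun n => (w n).2) atTop (𝓝 x))
    (hb : ∀ n, ‖(w n).2 - x‖ ≤ C * (w n).1) :
    x ∈ conicalLimitSet E := by
  obtain ⟨N, hN⟩ := eventually_atTop.mp hmem
  exact ⟨C, hC, fun n => w (n + N), fun n => hN _ (Nat.le_add_left N n),
    ht.comp (tendsto_add_atTop_nat N), hv.comp (tendsto_add_atTop_nat N), fun n => hb _⟩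

lemma localize {E : Set (ℝ × V)} (hE : E ⊆ upperHalf V) {U : Set V} (hU : IsOpen U) :
    conicalLimitSet {p ∈ E | ∀ y ∉ U, Real.sqrt p.1 ≤ dist p.2 y}
      = conicalLimitSet E ∩ U := by
  apply Set.Subset.antisymm
  · rintro x ⟨C, hC, w, hmem, ht, hv, hb⟩
    refine ⟨⟨C, hC, w, fun n => (hmem n).1, ht, hv, hb⟩, ?_⟩
    by_contra hxU
    have hs : Tendsto (fun n => C * Real.sqrt (w n).1) atTop (𝓝 0) := by
      simpa using (sqrt_tendsto ht).const_mul C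
    obtain ⟨n, hn⟩ := (hs.eventually (gt_mem_nhds one_pos)).exists
    have htn : 0 < (w n).1 := upperHalf_pos (hE (hmem n).1)
    have h2 : Real.sqrt (w n).1 ≤ dist (w n).2 x := (hmem n).2 x hxU
    have h3 : dist (w n).2 x ≤ C * (w n).1 := by rw [dist_eq_norm]; exact hb n
    exact sqrt_contra htn hn h2 h3
  · rintro x ⟨hx, hxU⟩
    obtain ⟨C, hC, w, hmem, ht, hv, hb⟩ := hx
    obtain ⟨ε, hε, hball⟩ := Metric.isOpen_iff.mp hU x hxU
    have hev : ∀ᶠ n in atTop, Real.sqrt (w n).1 + C * (w n).1 < ε := by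
      have h : Tendsto (fun n => Real.sqrt (w n).1 + C * (w n).1) atTop (𝓝 0) := by
        simpa using (sqrt_tendsto ht).add (ht.const_mul C)
      exact h.eventually (gt_mem_nhds hε)
    refine mem_of_eventually hC w ?_ ht hv hb
    filter_upwards [hev] with n hn
    refine ⟨hmem n, fun y hy => ?_⟩
    have hxy : ε ≤ dist x y := by
      by_contra h
      push_neg at h
      exact hy (hball (by rw [Metric.mem_ball, dist_comm]; exact h))
    have htri : dist x y ≤ dist x (w n).2 + dist (w n).2 y := dist_triangle _ _ _
    have hvx : dist x (w n).2 ≤ C * (w n).1 := by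
      rw [dist_comm, dist_eq_norm]; exact hb n
    linarith

lemma union_lemma (X : Set V) (W : ℕ → Set V)
    (hW : ∀ n, IsOpen (W n)) (hcov : X ⊆ ⋃ n, W n)
    (E : ℕ → Set (ℝ × V)) (hE : ∀ n, E n ⊆ upperHalf V)
    (hEeq : ∀ n, conicalLimitSet (E n) = X ∩ W n) :
    IsConicalLimitSet X := by
  classical
  set F : ℕ → Set (ℝ × V) := fun n =>
    {p ∈ E n | (∀ y ∉ W n, Real.sqrt p.1 ≤ dist p.2 y) ∧
      ∀ j, j < n → (∀ y ∉ W j, Real.sqrt p.1 ≤ dist p.2 y) →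
        ∃ q ∈ E j, p.1 ≤ 2 * q.1 ∧ q.1 ≤ 2 * p.1 ∧ dist q.2 p.2 ≤ p.1} with hFdef
  have hFE : ∀ n, F n ⊆ E n := fun n p hp => hp.1
  refine ⟨⋃ n, F n, Set.iUnion_subset fun n => (hFE n).trans (hE n), ?_⟩
  apply Set.Subset.antisymm
  · -- conicalLimitSet (⋃ n, F n) ⊆ X
    rintro x ⟨C, hC, w, hmem, ht, hv, hb⟩
    have hbd : ∀ k, dist (w k).2 x ≤ C * (w k).1 := fun k => by
      rw [dist_eq_norm]; exact hb k
    by_cases hcase : ∃ n, ∃ᶠ k in atTop, w k ∈ F n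
    · obtain ⟨n, hn⟩ := hcase
      obtain ⟨φ, hφ, hφF⟩ := Filter.extraction_of_frequently_atTop hn
      have hx : x ∈ conicalLimitSet (E n) :=
        ⟨C, hC, w ∘ φ, fun k => hFE n (hφF k), ht.comp hφ.tendsto_atTop,
          hv.comp hφ.tendsto_atTop, fun k => hb _⟩
      rw [hEeq n] at hx
      exact hx.1
    · push_neg at hcase
      have hFev : ∀ n, ∀ᶠ k in atTop, w k ∉ F n := fun n => hcase n
      have htk : ∀ k, 0 < (w k).1 := fun k => by
        obtain ⟨n, hn⟩ := Set.mem_iUnion.mp (hmem k)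
        exact upperHalf_pos (hE n (hFE n hn))
      have hsmall : ∀ᶠ k in atTop, C * Real.sqrt (w k).1 < 1 := by
        have h : Tendsto (fun k => C * Real.sqrt (w k).1) atTop (𝓝 0) := by
          simpa using (sqrt_tendsto ht).const_mul C
        exact h.eventually (gt_mem_nhds one_pos)
      have hxV : ∃ n, x ∈ W n := by
        by_contra hnot
        push_neg at hnot
        obtain ⟨k, hk⟩ := hsmall.exists
        obtain ⟨n, hn⟩ := Set.mem_iUnion.mp (hmem k)
        exact sqrt_contra (htk k) hk (hn.2.1 x (hnot n)) (hbd k)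
      set j := Nat.find hxV with hj
      have hxj : x ∈ W j := Nat.find_spec hxV
      obtain ⟨ε, hε, hball⟩ := Metric.isOpen_iff.mp (hW j) x hxj
      have hA : ∀ᶠ k in atTop, ∀ j' ∈ Finset.range (j + 1), w k ∉ F j' :=
        (Filter.eventually_all_finset _).mpr fun j' _ => hFev j'
      have hB : ∀ᶠ k in atTop, Real.sqrt (w k).1 + C * (w k).1 < ε := by
        have h : Tendsto (fun k => Real.sqrt (w k).1 + C * (w k).1) atTop (𝓝 0) := by
          simpa using (sqrt_tendsto ht).add (ht.const_mul C)
        exact h.eventually (gt_mem_nhds hε)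
      have hP : ∀ᶠ k in atTop, ∃ q, q ∈ E j ∧
          (w k).1 ≤ 2 * q.1 ∧ q.1 ≤ 2 * (w k).1 ∧ dist q.2 (w k).2 ≤ (w k).1 := by
        filter_upwards [hA, hB] with k hk1 hk2
        obtain ⟨n, hn⟩ := Set.mem_iUnion.mp (hmem k)
        have hjn : j < n := by
          by_contra hle
          push_neg at hle
          exact hk1 n (Finset.mem_range.mpr (Nat.lt_succ_of_le hle)) hn
        have hcond : ∀ y ∉ W j, Real.sqrt (w k).1 ≤ dist (w k).2 y := by
          intro y hy
          have hxy : ε ≤ dist x y := by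
            by_contra h
            push_neg at h
            exact hy (hball (by rw [Metric.mem_ball, dist_comm]; exact h))
          have htri : dist x y ≤ dist x (w k).2 + dist (w k).2 y := dist_triangle _ _ _
          have hxw : dist x (w k).2 ≤ C * (w k).1 := by rw [dist_comm]; exact hbd k
          linarith
        obtain ⟨q, hq, h1, h2, h3⟩ := hn.2.2 j hjn hcond
        exact ⟨q, hq, h1, h2, h3⟩
      obtain ⟨N, hN⟩ := eventually_atTop.mp hP
      choose q hq1 hq2 hq3 hq4 using fun k => hN (k + N) (Nat.le_add_left N k)
      have htN : Tendsto (fun k => (w (k + N)).1) atTop (𝓝 0) :=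
        ht.comp (tendsto_add_atTop_nat N)
      have hdq : ∀ k, dist (q k).2 x ≤ (w (k + N)).1 + C * (w (k + N)).1 := by
        intro k
        calc dist (q k).2 x ≤ dist (q k).2 (w (k + N)).2 + dist (w (k + N)).2 x :=
              dist_triangle _ _ _
          _ ≤ (w (k + N)).1 + C * (w (k + N)).1 := add_le_add (hq4 k) (hbd _)
      have hx : x ∈ conicalLimitSet (E j) := by
        refine ⟨2 * (C + 1), by linarith, q, hq1, ?_, ?_, ?_⟩
        · apply squeeze_zero (fun k => (upperHalf_pos (hE j (hq1 k))).le)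
            (fun k => hq3 k)
          simpa using htN.const_mul 2
        · rw [tendsto_iff_dist_tendsto_zero]
          apply squeeze_zero (fun k => dist_nonneg) hdq
          simpa using htN.add (htN.const_mul C)
        · intro k
          have h2 : (w (k + N)).1 ≤ 2 * (q k).1 := hq2 k
          have h1 := hdq k
          rw [← dist_eq_norm]
          nlinarith [hC.le]
      rw [hEeq j] at hx
      exact hx.1
  · -- X ⊆ conicalLimitSet (⋃ n, F n)
    intro x hx
    have hxV : ∃ n, x ∈ W n := Set.mem_iUnion.mp (hcov hx)
    set j := Nat.find hxV with hj
    have hxj : x ∈ W j := Nat.find_spec hxV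
    have hxlt : ∀ j' < j, x ∉ W j' := fun j' h => Nat.find_min hxV h
    have hxE : x ∈ conicalLimitSet (E j) := by rw [hEeq j]; exact ⟨hx, hxj⟩
    obtain ⟨C, hC, w, hmem, ht, hv, hb⟩ := hxE
    obtain ⟨ε, hε, hball⟩ := Metric.isOpen_iff.mp (hW j) x hxj
    have hbd : ∀ n, dist (w n).2 x ≤ C * (w n).1 := fun n => by
      rw [dist_eq_norm]; exact hb n
    have hB : ∀ᶠ n in atTop, Real.sqrt (w n).1 + C * (w n).1 < ε := by
      have h : Tendsto (fun n => Real.sqrt (w n).1 + C * (w n).1) atTop (𝓝 0) := by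
        simpa using (sqrt_tendsto ht).add (ht.const_mul C)
      exact h.eventually (gt_mem_nhds hε)
    have hsmall : ∀ᶠ n in atTop, C * Real.sqrt (w n).1 < 1 := by
      have h : Tendsto (fun n => C * Real.sqrt (w n).1) atTop (𝓝 0) := by
        simpa using (sqrt_tendsto ht).const_mul C
      exact h.eventually (gt_mem_nhds one_pos)
    apply conical_mono (Set.subset_iUnion F j)
    refine mem_of_eventually hC w ?_ ht hv hb
    filter_upwards [hB, hsmall] with n h1 h2
    refine ⟨hmem n, ?_, ?_⟩
    · intro y hy
      have hxy : ε ≤ dist x y := by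
        by_contra h
        push_neg at h
        exact hy (hball (by rw [Metric.mem_ball, dist_comm]; exact h))
      have htri : dist x y ≤ dist x (w n).2 + dist (w n).2 y := dist_triangle _ _ _
      have hxw : dist x (w n).2 ≤ C * (w n).1 := by rw [dist_comm]; exact hbd n
      linarith
    · intro j' hj' hcond
      exfalso
      exact sqrt_contra (upperHalf_pos (hE j (hmem n))) h2 (hcond x (hxlt j' hj')) (hbd n)

end ConicalAux

/-- Being a conical limit set is a local property: if `{U i}` is a cover of `X` by open
subsets of `ℝ^m`, then `X` is a conical limit set iff each `X ∩ U i` is. -/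
theorem isConicalLimitSet_iff_locally (m : ℕ) (hm : 1 ≤ m) {I : Type*}
    (X : Set (EuclideanSpace ℝ (Fin m))) (U : I → Set (EuclideanSpace ℝ (Fin m)))
    (hU : ∀ i, IsOpen (U i)) (hcov : X ⊆ ⋃ i, U i) :
    IsConicalLimitSet X ↔ ∀ i, IsConicalLimitSet (X ∩ U i) := by
  constructor
  · rintro ⟨E, hE, hEeq⟩ i
    exact ⟨{p ∈ E | ∀ y ∉ U i, Real.sqrt p.1 ≤ dist p.2 y},
      fun p hp => hE hp.1, by rw [ConicalAux.localize hE (hU i), hEeq]⟩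
  · intro h
    by_cases hX : X = ∅
    · exact ⟨∅, Set.empty_subset _, by rw [ConicalAux.conical_empty, hX]⟩
    · obtain ⟨T, hTc, hTU⟩ := TopologicalSpace.isOpen_iUnion_countable U hU
      have hTne : T.Nonempty := by
        obtain ⟨x, hx⟩ := Set.nonempty_iff_ne_empty.mpr hX
        have hx' := hcov hx
        rw [← hTU] at hx'
        obtain ⟨i, hi, -⟩ := Set.mem_iUnion₂.mp hx'
        exact ⟨i, hi⟩
      obtain ⟨g, hg⟩ := Set.Countable.exists_eq_range hTc hTne
      have hcov' : X ⊆ ⋃ n, U (g n) := by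
        intro x hx
        have hx' := hcov hx
        rw [← hTU, hg, Set.biUnion_range] at hx'
        exact hx'
      choose E hEsub hEeq using fun n => h (g n)
      exact ConicalAux.union_lemma X (fun n => U (g n)) (fun n => hU (g n)) hcov' E hEsub hEeq
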